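/- Let a, b be odd coprime nonzero integers with a + b ≠ 0, let d₀ be an odd positive integer, let 0 ≤ T < k, and let ε ≥ 2. Then 2^ε·d₀ is (T,k)-good with respect to (a,b) if and only if ε ≤ ν₂(a+b) and there exists a positive integer s such that d₀ divides a^(ks+T)+b^(ks+T) and ks+T is odd. -/

import Mathlib

/-- For odd `a, b` and odd `n`, `a^n + b^n = S * (a + b)` with `S` odd. -/
lemma aux_odd_factor (a b : ℤ) (haodd : Odd a) (hbodd : Odd b) (n : ℕ) (hn : Odd n) :
    ∃ S : ℤ, Odd S ∧ a ^ n + b ^ n = S * (a + b) := by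
  refine ⟨∑ i ∈ Finset.range n, a ^ i * (-b) ^ (n - 1 - i), ?_, ?_⟩
  · have haz : (a : ZMod 2) = 1 := by
      have h2 : ¬ (2 : ℤ) ∣ a := by rw [← even_iff_two_dvd, Int.not_even_iff_odd]; exact haodd
      have h0 : (a : ZMod 2) ≠ 0 := by
        rw [Ne, ZMod.intCast_zmod_eq_zero_iff_dvd]; exact_mod_cast h2
      revert h0; generalize (a : ZMod 2) = x; revert x; decide
    have hbz : (b : ZMod 2) = 1 := by
      have h2 : ¬ (2 : ℤ) ∣ b := by rw [← even_iff_two_dvd, Int.not_even_iff_odd]; exact hbodd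
      have h0 : (b : ZMod 2) ≠ 0 := by
        rw [Ne, ZMod.intCast_zmod_eq_zero_iff_dvd]; exact_mod_cast h2
      revert h0; generalize (b : ZMod 2) = x; revert x; decide
    have hS1 : ((∑ i ∈ Finset.range n, a ^ i * (-b) ^ (n - 1 - i) : ℤ) : ZMod 2) = 1 := by
      push_cast
      simp only [haz, hbz, one_pow, mul_one, one_mul]
      have hneg : ((-1 : ZMod 2)) = 1 := by decide
      have hn1 : (n : ZMod 2) = 1 := by
        obtain ⟨m, hm⟩ := hn
        subst hm; push_cast; ring_nf
        simp [show ((2 : ZMod 2)) = 0 by decide]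
      calc (∑ i ∈ Finset.range n, ((-1 : ZMod 2)) ^ (n - 1 - i))
          = ∑ _i ∈ Finset.range n, (1 : ZMod 2) := by
            refine Finset.sum_congr rfl fun i _ => by rw [hneg, one_pow]
        _ = n • (1 : ZMod 2) := by rw [Finset.sum_const, Finset.card_range]
        _ = 1 := by rw [nsmul_eq_mul, mul_one, hn1]
    rw [← Int.not_even_iff_odd, even_iff_two_dvd]
    intro hdvd
    have h0 := (ZMod.intCast_zmod_eq_zero_iff_dvd
      (∑ i ∈ Finset.range n, a ^ i * (-b) ^ (n - 1 - i)) 2).mpr (by exact_mod_cast hdvd)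
    rw [hS1] at h0
    exact one_ne_zero h0
  · have h := geom_sum₂_mul a (-b) n
    rw [Odd.neg_pow hn b, sub_neg_eq_add, sub_neg_eq_add] at h
    linarith [h]

theorem stmt_10 (a b : ℤ) (ha : a ≠ 0) (hb : b ≠ 0) (hab : IsCoprime a b)
    (haodd : Odd a) (hbodd : Odd b) (hsum : a + b ≠ 0)
    (d₀ : ℕ) (hd₀ : 0 < d₀) (hd₀odd : Odd d₀)
    (k T : ℕ) (hT : T < k) (ε : ℕ) (hε : 2 ≤ ε) :
    (∃ s : ℕ, 0 < s ∧ ((2 ^ ε * d₀ : ℕ) : ℤ) ∣ a ^ (k * s + T) + b ^ (k * s + T)) ↔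
      ε ≤ padicValInt 2 (a + b) ∧
        ∃ s : ℕ, 0 < s ∧ (d₀ : ℤ) ∣ a ^ (k * s + T) + b ^ (k * s + T) ∧
          Odd (k * s + T) := by
  haveI : Fact (Nat.Prime 2) := ⟨Nat.prime_two⟩
  have hcop : ∀ m : ℕ, IsCoprime ((2 : ℤ) ^ ε) m → True := fun _ _ => trivial
  constructor
  · rintro ⟨s, hs, hdvd⟩
    set n := k * s + T with hn
    push_cast at hdvd
    have h2e : (2 : ℤ) ^ ε ∣ a ^ n + b ^ n := dvd_trans (dvd_mul_right _ _) hdvd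
    have hd0 : (d₀ : ℤ) ∣ a ^ n + b ^ n := dvd_trans (dvd_mul_left _ _) hdvd
    -- n is odd
    have hnodd : Odd n := by
      by_contra hne
      rw [← Nat.not_even_iff_odd, not_not] at hne
      obtain ⟨m, hm⟩ := hne
      have h4 : (4 : ℤ) ∣ a ^ n + b ^ n := by
        refine dvd_trans ?_ h2e
        calc (4 : ℤ) = 2 ^ 2 := by norm_num
        _ ∣ 2 ^ ε := pow_dvd_pow 2 hε
      have hz : ((a ^ n + b ^ n : ℤ) : ZMod 4) = 0 :=
        (ZMod.intCast_zmod_eq_zero_iff_dvd _ 4).mpr (by exact_mod_cast h4)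
      have ham : Odd (a ^ m) := haodd.pow
      have hbm : Odd (b ^ m) := hbodd.pow
      have hmod : ∀ x : ℤ, Odd x → ((x : ZMod 4)) ^ 2 = 1 := by
        intro x hx
        have : ¬ (2 : ℤ) ∣ x := by rw [← even_iff_two_dvd, Int.not_even_iff_odd]; assumption
        have h1 : ¬ ((x : ZMod 4) = 0 ∨ (x : ZMod 4) = 2) := by
          rintro (h | h)
          · exact this (dvd_trans ⟨2, by norm_num⟩
              ((ZMod.intCast_zmod_eq_zero_iff_dvd x 4).mp h))
          · have h42 : ((x - 2 : ℤ) : ZMod 4) = 0 := by push_cast [h]; ring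
            rw [ZMod.intCast_zmod_eq_zero_iff_dvd] at h42
            have h22 : (2 : ℤ) ∣ x - 2 := dvd_trans (by norm_num) h42
            omega
        revert h1; generalize (x : ZMod 4) = y; revert y; decide
      have hcast : ((a ^ n + b ^ n : ℤ) : ZMod 4)
          = ((a ^ m : ℤ) : ZMod 4) ^ 2 + ((b ^ m : ℤ) : ZMod 4) ^ 2 := by
        push_cast
        rw [hm, ← two_mul, pow_mul, pow_mul]
        ring
      have : ((a ^ n + b ^ n : ℤ) : ZMod 4) = 2 := by
        rw [hcast, hmod _ ham, hmod _ hbm]; decide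
      rw [hz] at this
      exact absurd this (by decide)
    obtain ⟨S, hSodd, hfac⟩ := aux_odd_factor a b haodd hbodd n hnodd
    refine ⟨?_, s, hs, hd0, hnodd⟩
    -- 2^ε ∣ S * (a+b), S odd ⇒ 2^ε ∣ a+b
    have hScop : IsCoprime ((2 : ℤ) ^ ε) S := by
      apply IsCoprime.pow_left
      rw [Int.isCoprime_iff_gcd_eq_one]
      show Nat.gcd (2 : ℤ).natAbs S.natAbs = 1
      exact Nat.coprime_two_left.mpr (Int.natAbs_odd.mpr hSodd)
    have : (2 : ℤ) ^ ε ∣ a + b := by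
      rw [hfac] at h2e
      exact hScop.dvd_of_dvd_mul_left h2e
    have := (padicValInt_dvd_iff (p := 2) ε (a + b)).mp (by exact_mod_cast this)
    tauto
  · rintro ⟨hval, s, hs, hd0, hnodd⟩
    set n := k * s + T with hn
    obtain ⟨S, hSodd, hfac⟩ := aux_odd_factor a b haodd hbodd n hnodd
    refine ⟨s, hs, ?_⟩
    push_cast
    have h2e : (2 : ℤ) ^ ε ∣ a + b := by
      have := (padicValInt_dvd_iff (p := 2) ε (a + b)).mpr (Or.inr hval)
      exact_mod_cast this
    have h2e' : (2 : ℤ) ^ ε ∣ a ^ n + b ^ n := by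
      rw [hfac]; exact Dvd.dvd.mul_left h2e S
    have hcop2 : IsCoprime ((2 : ℤ) ^ ε) (d₀ : ℤ) := by
      apply IsCoprime.pow_left
      rw [Int.isCoprime_iff_gcd_eq_one]
      show Nat.gcd (2 : ℤ).natAbs (d₀ : ℤ).natAbs = 1
      exact Nat.coprime_two_left.mpr (by simpa using hd₀odd)
    exact hcop2.mul_dvd h2e' hd0
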